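/- Let [H•, E, G•] be a butterfly and ∂_E : H₁ × G₁ → E, (h,g) ↦ κ(h) ι(g). Then the first projection pr₁ : H₁ × G₁ → H₁ restricts to a group isomorphism ker ∂_E ≅ ker ∂_H. -/
import Mathlib


theorem stmt_9 {H₁ H₀ G₁ G₀ E : Type*} [Group H₁] [Group H₀] [Group G₁] [Group G₀] [Group E]
    (dH : H₁ →* H₀) (actH : H₁ → H₀ → H₁)
    (hH_one : ∀ g, actH g 1 = g)
    (hH_mul : ∀ g x y, actH g (x * y) = actH (actH g x) y)
    (hH_hom : ∀ g g' x, actH (g * g') x = actH g x * actH g' x)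
    (hH_d : ∀ g x, dH (actH g x) = x⁻¹ * dH g * x)
    (hH_peiffer : ∀ g h, actH g (dH h) = h⁻¹ * g * h)
    (dG : G₁ →* G₀) (actG : G₁ → G₀ → G₁)
    (hG_one : ∀ g, actG g 1 = g)
    (hG_mul : ∀ g x y, actG g (x * y) = actG (actG g x) y)
    (hG_hom : ∀ g g' x, actG (g * g') x = actG g x * actG g' x)
    (hG_d : ∀ g x, dG (actG g x) = x⁻¹ * dG g * x)
    (hG_peiffer : ∀ g h, actG g (dG h) = h⁻¹ * g * h)
    (κ : H₁ →* E) (ι : G₁ →* E) (π : E →* H₀) (j : E →* G₀)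
    (hπκ : ∀ h, π (κ h) = dH h)
    (hjι : ∀ g, j (ι g) = dG g)
    (hjκ : ∀ h, j (κ h) = 1)
    (hπsurj : Function.Surjective π)
    (hιinj : Function.Injective ι)
    (hkerπ : ∀ e, π e = 1 ↔ ∃ g, ι g = e)
    (heqG : ∀ g e, ι (actG g (j e)) = e⁻¹ * ι g * e)
    (heqH : ∀ h e, κ (actH h (π e)) = e⁻¹ * κ h * e) :
    ∃ φ : {p : H₁ × G₁ // κ p.1 * ι p.2 = 1} ≃ {h : H₁ // dH h = 1},
      ∀ p, (φ p).val = p.val.1 := by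
  have hπι : ∀ g : G₁, π (ι g) = 1 := fun g => (hkerπ (ι g)).mpr ⟨g, rfl⟩
  have hex : ∀ h : H₁, dH h = 1 → ∃ g, ι g = (κ h)⁻¹ := by
    intro h hh
    exact (hkerπ _).mp (by rw [map_inv, hπκ, hh, inv_one])
  refine ⟨{ toFun := fun p => ⟨p.val.1, ?_⟩
            invFun := fun h => ⟨(h.val, Classical.choose (hex h.val h.prop)), ?_⟩
            left_inv := ?_
            right_inv := ?_ }, fun p => rfl⟩
  · have := p.prop
    have h1 : π (κ p.val.1 * ι p.val.2) = 1 := by rw [this, map_one]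
    rw [map_mul, hπι, mul_one, hπκ] at h1
    exact h1
  · rw [Classical.choose_spec (hex h.val h.prop), mul_inv_cancel]
  · rintro ⟨⟨h, g⟩, hp⟩
    ext
    · rfl
    · apply hιinj
      have hh : dH h = 1 := by
        have h1 : π (κ h * ι g) = 1 := by rw [hp, map_one]
        rw [map_mul, hπι, mul_one, hπκ] at h1
        exact h1
      rw [Classical.choose_spec (hex h hh)]
      exact (eq_inv_of_mul_eq_one_right hp).symm
  · rintro ⟨h, hh⟩
    rfl
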